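/- Let T be a measure-preserving transformation of a probability space (E, ℰ, π) with regular conditional kernel K of X given T(X). If a measurable set B is accessible (i.e., some K^n(x,B) > 0) from π-almost every point x, then the forward orbit {T^k(x) : k ∈ ℕ} of π-almost every point x visits B infinitely often. -/

import Mathlib

open MeasureTheory ProbabilityTheory

/-- Iterated (n-step) transition kernel. -/
noncomputable def kpow {E : Type*} [MeasurableSpace E] (K : Kernel E E) : ℕ → Kernel E E
  | 0 => Kernel.id
  | n + 1 => (kpow K n).comp K

/-- sufficient condition for recurrence.  If `B` is accessible (for the
chain with kernel `K`, a regular conditional distribution of `X` given `T X`) from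
π-almost every point, then the forward orbit of π-almost every point visits `B`
infinitely often. -/
theorem sufficient_condition_for_recurrence
    {E : Type*} [MeasurableSpace E]
    (π : Measure E) [IsProbabilityMeasure π]
    (T : E → E) (hTm : Measurable T) (hT : MeasurePreserving T π π)
    (K : Kernel E E) [IsMarkovKernel K]
    (hK : π.map (fun x => (T x, x)) = π ⊗ₘ K)
    (B : Set E) (hB : MeasurableSet B)
    (hacc : ∀ᵐ x ∂π, ∃ n : ℕ, 0 < kpow K n x B) :
    ∀ᵐ x ∂π, ∀ n : ℕ, ∃ k ≥ n, T^[k] x ∈ B := by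
  classical
  -- key identity from hK
  have key : ∀ {C D : Set E}, MeasurableSet C → MeasurableSet D →
      π (T ⁻¹' C ∩ D) = ∫⁻ x in C, K x D ∂π := by
    intro C D hC hD
    have h1 : π.map (fun x => (T x, x)) (C ×ˢ D) = π (T ⁻¹' C ∩ D) := by
      rw [Measure.map_apply (show Measurable fun x => (T x, x) from
        hTm.prodMk measurable_id) (hC.prod hD)]
      congr 1
    have h2 : (π ⊗ₘ K) (C ×ˢ D) = ∫⁻ x in C, K x D ∂π :=
      Measure.compProd_apply_prod hC hD
    rw [← h1, hK, h2]
  -- stationarity of K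
  have hstat : ∀ {D : Set E}, MeasurableSet D → ∫⁻ x, K x D ∂π = π D := by
    intro D hD
    have := key MeasurableSet.univ hD
    simpa using this.symm
  -- apply of kpow at successor
  have hkpow_succ : ∀ (n : ℕ) (x : E) {s : Set E}, MeasurableSet s →
      kpow K (n + 1) x s = ∫⁻ z, kpow K n z s ∂(K x) := by
    intro n x s hs
    exact Kernel.comp_apply' (kpow K n) K x hs
  -- stationarity of kpow
  have hstatn : ∀ (n : ℕ) {D : Set E}, MeasurableSet D →
      ∫⁻ x, kpow K n x D ∂π = π D := by
    intro n
    induction n with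
    | zero =>
      intro D hD
      simp only [kpow, Kernel.id_apply]
      simp_rw [Measure.dirac_apply' _ hD]
      rw [lintegral_indicator hD]
      simp
    | succ n ih =>
      intro D hD
      have hmeas : Measurable fun z => kpow K n z D := (kpow K n).measurable_coe hD
      calc ∫⁻ x, kpow K (n + 1) x D ∂π
          = ∫⁻ x, ∫⁻ z, kpow K n z D ∂(K x) ∂π := by
            refine lintegral_congr fun x => hkpow_succ n x hD
        _ = ∫⁻ z, kpow K n z D ∂(π.bind K) := (Measure.lintegral_bind K.measurable.aemeasurable hmeas.aemeasurable).symm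
        _ = ∫⁻ z, kpow K n z D ∂π := by
            congr 1
            ext s hs
            rw [Measure.bind_apply hs K.measurable.aemeasurable, hstat hs]
        _ = π D := ih hD
  -- null transfer
  have hnull : ∀ (n : ℕ) {N : Set E}, MeasurableSet N → π N = 0 →
      ∀ᵐ x ∂π, kpow K n x N = 0 := by
    intro n N hN h0
    have h := hstatn n hN
    rw [h0] at h
    exact (lintegral_eq_zero_iff ((kpow K n).measurable_coe hN)).mp h
  -- the set of points visiting B infinitely often
  set A : Set E := ⋂ n : ℕ, ⋃ k : ℕ, ⋃ _ : k ≥ n, T^[k] ⁻¹' B with hAdef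
  have hmemA : ∀ x, x ∈ A ↔ ∀ n : ℕ, ∃ k ≥ n, T^[k] x ∈ B := by
    intro x
    simp [hAdef, Set.mem_iInter, Set.mem_iUnion]
  have hA : MeasurableSet A := by
    refine MeasurableSet.iInter fun n => MeasurableSet.iUnion fun k =>
      MeasurableSet.iUnion fun _ => ?_
    exact (hTm.iterate k) hB
  -- invariance of A
  have hinv : T ⁻¹' A = A := by
    ext x
    simp only [Set.mem_preimage, hmemA]
    constructor
    · intro h n
      obtain ⟨k, hk, hkB⟩ := h n
      exact ⟨k + 1, le_trans hk (Nat.le_succ k), by rwa [Function.iterate_succ_apply]⟩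
    · intro h n
      obtain ⟨k, hk, hkB⟩ := h (n + 1)
      obtain ⟨m, rfl⟩ := Nat.exists_eq_add_of_le hk
      refine ⟨n + m, Nat.le_add_right n m, ?_⟩
      rw [show n + 1 + m = n + m + 1 by omega, Function.iterate_succ_apply] at hkB
      exact hkB
  -- Poincaré recurrence : a.e. x in B is in A
  have hpoin : ∀ᵐ x ∂π, x ∈ B → x ∈ A := by
    have hc : Conservative T π := hT.conservative
    filter_upwards [hc.ae_mem_imp_frequently_image_mem hB.nullMeasurableSet] with x hx hxB
    rw [hmemA]
    intro n
    exact Filter.frequently_atTop.mp (hx hxB) n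
  have hBA : π (B \ A) = 0 := by
    refine measure_mono_null ?_ (ae_iff.mp hpoin)
    intro x hx
    simp only [Set.mem_setOf_eq, Set.mem_diff] at *
    tauto
  -- one-step invariance for K
  have hstep : ∀ᵐ x ∂π, x ∉ A → K x A = 0 := by
    have h := key hA.compl hA
    have hempty : T ⁻¹' Aᶜ ∩ A = ∅ := by
      rw [Set.preimage_compl, hinv]
      exact Set.compl_inter_self A
    rw [hempty, measure_empty] at h
    have h2 := (setLIntegral_eq_zero_iff hA.compl (K.measurable_coe hA)).mp h.symm
    exact h2
  -- n-step invariance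
  have hstepn : ∀ n : ℕ, ∀ᵐ x ∂π, x ∉ A → kpow K n x A = 0 := by
    intro n
    induction n with
    | zero =>
      refine Filter.Eventually.of_forall fun x hx => ?_
      simp only [kpow, Kernel.id_apply]
      rw [Measure.dirac_apply' _ hA]
      simp [hx]
    | succ n ih =>
      -- take a measurable null superset of the exceptional set of ih
      obtain ⟨N, hNsub, hNmeas, hNnull⟩ :=
        exists_measurable_superset_of_null (ae_iff.mp ih)
      have hKN : ∀ᵐ x ∂π, K x N = 0 := by
        have h := hstat hNmeas
        rw [hNnull] at h
        exact (lintegral_eq_zero_iff (K.measurable_coe hNmeas)).mp h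
      filter_upwards [hstep, hKN] with x hx hxN hxA
      rw [hkpow_succ n x hA]
      have hsupp : K x (A ∪ N) = 0 :=
        le_antisymm (le_trans (measure_union_le A N)
          (by rw [hx hxA, hxN]; simp)) zero_le
      refine (lintegral_eq_zero_iff ((kpow K n).measurable_coe hA)).mpr ?_
      rw [Filter.EventuallyEq, ae_iff]
      refine measure_mono_null ?_ hsupp
      intro z hz
      simp only [Set.mem_setOf_eq, Pi.zero_apply] at hz
      by_contra hzc
      simp only [Set.mem_union] at hzc
      push_neg at hzc
      have hzA : z ∉ A := hzc.1
      have hzN : z ∉ N := hzc.2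
      by_cases hcase : z ∉ A → kpow K n z A = 0
      · exact hz (hcase hzA)
      · exact hzN (hNsub hcase)
  -- B \ A mass is 0 under kpow
  have hBAn : ∀ n : ℕ, ∀ᵐ x ∂π, kpow K n x (B \ A) = 0 :=
    fun n => hnull n (hB.diff hA) hBA
  -- combine
  have hall1 : ∀ᵐ x ∂π, ∀ n : ℕ, x ∉ A → kpow K n x A = 0 := ae_all_iff.mpr hstepn
  have hall2 : ∀ᵐ x ∂π, ∀ n : ℕ, kpow K n x (B \ A) = 0 := ae_all_iff.mpr hBAn
  filter_upwards [hacc, hall1, hall2] with x hxacc hx1 hx2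
  rw [← hmemA]
  by_contra hxA
  obtain ⟨n, hn⟩ := hxacc
  have hle : kpow K n x B ≤ kpow K n x A + kpow K n x (B \ A) := by
    refine le_trans (measure_mono ?_) (measure_union_le A (B \ A))
    intro z hz
    by_cases h : z ∈ A
    · exact Or.inl h
    · exact Or.inr ⟨hz, h⟩
  rw [hx1 n hxA, hx2 n] at hle
  simp only [add_zero, nonpos_iff_eq_zero] at hle
  exact absurd hle (ne_of_gt hn)
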